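/- Let μ be a regular uncountable cardinal, δ an ordinal, and S ⊆ μ a stationary set. For any sequence ⟨η_α : α ∈ S⟩ of finite strictly decreasing sequences of ordinals below δ, there is a stationary S' ⊆ S such that the subsequence forms a Δ-system: (1) all η_α for α ∈ S' have the same length n; (2) for each i < n, the sequence ⟨η_α(i) : α ∈ S'⟩ is either constant or strictly increasing (in the index α); (3) for all i < j < n and all α, β ∈ S', η_α(i) ≠ η_β(j). -/

import Mathlib

set_option maxHeartbeats 1000000

/-- `o` is an accumulation point of `C`. -/
def IsAcc (o : Ordinal) (C : Set Ordinal) : Prop :=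
  o ≠ 0 ∧ ∀ b < o, ∃ c ∈ C, b < c ∧ c < o

/-- `C` is closed and unbounded (a club) in `μ`. -/
def IsClubIn (C : Set Ordinal) (μ : Ordinal) : Prop :=
  (∀ o < μ, IsAcc o C → o ∈ C) ∧ ∀ b < μ, ∃ c ∈ C, b < c ∧ c < μ

/-- `S` is a stationary subset of `μ`. -/
def IsStationaryIn (S : Set Ordinal) (μ : Ordinal) : Prop :=
  S ⊆ Set.Iio μ ∧ ∀ C : Set Ordinal, IsClubIn C μ → (S ∩ C).Nonempty

namespace Stmt9

open Ordinal Set Cardinal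

universe u v

variable {μ : Cardinal.{u}}

lemma succ_lt_kappa (hunc : ℵ₀ < μ) {x : Ordinal} (hx : x < μ.ord) : x + 1 < μ.ord := by
  rw [Ordinal.add_one_eq_succ]
  exact (Cardinal.isSuccLimit_ord hunc.le).succ_lt hx

lemma kappa_pos (hunc : ℵ₀ < μ) : (0 : Ordinal) < μ.ord :=
  (Cardinal.isSuccLimit_ord hunc.le).pos

lemma isClubIn_Iio (hunc : ℵ₀ < μ) : IsClubIn (Set.Iio μ.ord) μ.ord := by
  constructor
  · intro o ho _; exact ho
  · intro b hb
    exact ⟨b + 1, succ_lt_kappa hunc hb, lt_add_one b, succ_lt_kappa hunc hb⟩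

lemma empty_not_stationary (hunc : ℵ₀ < μ) : ¬ IsStationaryIn (∅ : Set Ordinal) μ.ord := by
  intro h
  obtain ⟨x, hx, -⟩ := h.2 _ (isClubIn_Iio hunc)
  exact hx

lemma stationary_mono {S T : Set Ordinal} (hST : S ⊆ T) (hT : T ⊆ Set.Iio μ.ord)
    (hS : IsStationaryIn S μ.ord) : IsStationaryIn T μ.ord := by
  refine ⟨hT, fun C hC => ?_⟩
  obtain ⟨x, hx1, hx2⟩ := hS.2 C hC
  exact ⟨x, hST hx1, hx2⟩

lemma exists_disjoint_club {T : Set Ordinal} (hT : T ⊆ Set.Iio μ.ord)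
    (h : ¬ IsStationaryIn T μ.ord) : ∃ C, IsClubIn C μ.ord ∧ T ∩ C = ∅ := by
  by_contra hc
  push_neg at hc
  refine h ⟨hT, fun C hC => ?_⟩
  exact hc C hC

/-- The ω-chain engine. -/
lemma omega_chain (hreg : μ.IsRegular) (hunc : ℵ₀ < μ) {P : Ordinal → Ordinal → Prop}
    (hstep : ∀ x, x < μ.ord → ∃ y, y < μ.ord ∧ x < y ∧ P x y) {b : Ordinal} (hb : b < μ.ord) :
    ∃ g : ℕ → Ordinal, g 0 = b ∧ (∀ n, g n < μ.ord) ∧ StrictMono g ∧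
      (∀ n, P (g n) (g (n + 1))) ∧
      b < (⨆ n, g n) ∧ (⨆ n, g n) < μ.ord ∧ (⨆ n, g n) ≠ 0 ∧
      (∀ x < (⨆ n, g n), ∃ n, x < g n) ∧ (∀ n, g n < (⨆ n, g n)) := by
  classical
  have hstep' : ∀ x, ∃ y, x < μ.ord → (y < μ.ord ∧ x < y ∧ P x y) := by
    intro x
    by_cases hx : x < μ.ord
    · obtain ⟨y, hy⟩ := hstep x hx
      exact ⟨y, fun _ => hy⟩
    · exact ⟨0, fun h => absurd h hx⟩
  choose step hstepspec using hstep'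
  let g : ℕ → Ordinal := fun n => Nat.rec b (fun _ y => step y) n
  have hg0 : g 0 = b := rfl
  have hgs : ∀ n, g (n + 1) = step (g n) := fun n => rfl
  have hlt : ∀ n, g n < μ.ord := by
    intro n
    induction n with
    | zero => exact hb
    | succ n ih =>
      rw [hgs n]
      exact (hstepspec _ ih).1
  have hmono : ∀ n, g n < g (n + 1) := by
    intro n
    rw [hgs n]
    exact (hstepspec _ (hlt n)).2.1
  have hP : ∀ n, P (g n) (g (n + 1)) := by
    intro n
    rw [hgs n]
    exact (hstepspec _ (hlt n)).2.2
  have hsm : StrictMono g := strictMono_nat_of_lt_succ hmono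
  have hsup_lt : (⨆ n, g n) < μ.ord := by
    refine Cardinal.iSup_lt_ord_lift_of_isRegular hreg ?_ hlt
    simpa using hunc
  have hgle : ∀ n, g n ≤ (⨆ n, g n) := fun n => Ordinal.le_iSup g n
  have hglt : ∀ n, g n < (⨆ n, g n) := fun n => lt_of_lt_of_le (hmono n) (hgle (n + 1))
  have hbs : b < (⨆ n, g n) := hg0 ▸ hglt 0
  refine ⟨g, hg0, hlt, hsm, hP, hbs, hsup_lt, ?_, ?_, hglt⟩
  · exact fun h => (not_lt.mpr (zero_le (a := b))) (h ▸ hbs)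
  · intro x hx
    exact Ordinal.lt_iSup_iff.mp hx

/-- Intersection of countably many clubs is a club. -/
lemma isClubIn_iInter (hreg : μ.IsRegular) (hunc : ℵ₀ < μ) {ι : Type} [Countable ι]
    {C : ι → Set Ordinal} (h : ∀ i, IsClubIn (C i) μ.ord) :
    IsClubIn (⋂ i, C i) μ.ord := by
  constructor
  · intro o ho hacc
    refine Set.mem_iInter.mpr fun i => (h i).1 o ho ⟨hacc.1, fun b hb => ?_⟩
    obtain ⟨c, hc, hbc, hco⟩ := hacc.2 b hb
    exact ⟨c, Set.mem_iInter.mp hc i, hbc, hco⟩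
  · intro b hb
    have hstep : ∀ x, x < μ.ord → ∃ y, y < μ.ord ∧ x < y ∧
        ∀ i, ∃ c ∈ C i, x < c ∧ c ≤ y := by
      intro x hx
      have pick : ∀ i, ∃ c, c ∈ C i ∧ x < c ∧ c < μ.ord := by
        intro i; obtain ⟨c, h1, h2, h3⟩ := (h i).2 x hx; exact ⟨c, h1, h2, h3⟩
      choose p hp1 hp2 hp3 using pick
      have hsup : (⨆ i, p i) < μ.ord := by
        refine Cardinal.iSup_lt_ord_lift_of_isRegular hreg ?_ hp3
        calc Cardinal.lift.{u} #ι ≤ Cardinal.lift.{u} ℵ₀ := by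
              exact_mod_cast Cardinal.lift_le.mpr (Cardinal.mk_le_aleph0)
          _ = ℵ₀ := by simp
          _ < μ := hunc
      refine ⟨max (x + 1) (⨆ i, p i), max_lt (succ_lt_kappa hunc hx) hsup,
        lt_of_lt_of_le (lt_add_one x) (le_max_left _ _), fun i => ?_⟩
      exact ⟨p i, hp1 i, hp2 i, le_trans (Ordinal.le_iSup p i) (le_max_right _ _)⟩
    obtain ⟨g, hg0, hglt, hsm, hP, hbs, hslt, hsne, hsdown, hgsup⟩ :=
      omega_chain hreg hunc hstep hb
    refine ⟨⨆ n, g n, ?_, hbs, hslt⟩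
    refine Set.mem_iInter.mpr fun i => (h i).1 _ hslt ⟨hsne, fun x hx => ?_⟩
    obtain ⟨n, hn⟩ := hsdown x hx
    obtain ⟨c, hc, hc1, hc2⟩ := hP n i
    exact ⟨c, hc, lt_of_lt_of_le hn hc1.le, lt_of_le_of_lt hc2 (hgsup (n + 1))⟩

lemma isClubIn_inter (hreg : μ.IsRegular) (hunc : ℵ₀ < μ) {A B : Set Ordinal}
    (hA : IsClubIn A μ.ord) (hB : IsClubIn B μ.ord) : IsClubIn (A ∩ B) μ.ord := by
  have h := isClubIn_iInter hreg hunc (ι := Bool) (C := fun b => if b then A else B)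
    (by intro i; cases i <;> simpa)
  have : (⋂ i : Bool, if i then A else B) = A ∩ B := by
    ext x; simp [Set.mem_iInter, Bool.forall_bool, and_comm]
  rwa [this] at h

lemma stationary_sdiff (hreg : μ.IsRegular) (hunc : ℵ₀ < μ) {S T : Set Ordinal}
    (hS : IsStationaryIn S μ.ord)
    (hT : ¬ IsStationaryIn T μ.ord) (hTsub : T ⊆ Set.Iio μ.ord) :
    IsStationaryIn (S \ T) μ.ord := by
  obtain ⟨C, hC, hdisj⟩ := exists_disjoint_club hTsub hT
  refine ⟨fun x hx => hS.1 hx.1, fun C' hC' => ?_⟩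
  obtain ⟨x, hxS, hxC, hxC'⟩ := hS.2 (C ∩ C') (isClubIn_inter hreg hunc hC hC')
  refine ⟨x, ⟨hxS, fun hxT => ?_⟩, hxC'⟩
  have : x ∈ T ∩ C := ⟨hxT, hxC⟩
  rw [hdisj] at this
  exact this

/-- Diagonal intersection of clubs is a club. -/
lemma isClubIn_diagonal (hreg : μ.IsRegular) (hunc : ℵ₀ < μ) {C : Ordinal → Set Ordinal}
    (h : ∀ γ, γ < μ.ord → IsClubIn (C γ) μ.ord) :
    IsClubIn {β | β < μ.ord ∧ ∀ γ < β, β ∈ C γ} μ.ord := by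
  constructor
  · intro o ho hacc
    refine ⟨ho, fun γ hγ => ?_⟩
    refine (h γ (hγ.trans ho)).1 o ho ⟨hacc.1, fun b hb => ?_⟩
    obtain ⟨c, hc, hbc, hco⟩ := hacc.2 (max b γ) (max_lt hb hγ)
    exact ⟨c, hc.2 γ (lt_of_le_of_lt (le_max_right b γ) hbc),
      lt_of_le_of_lt (le_max_left b γ) hbc, hco⟩
  · intro b hb
    have hstep : ∀ x, x < μ.ord → ∃ y, y < μ.ord ∧ x < y ∧
        ∀ γ, ∀ _ : γ < x, ∃ c ∈ C γ, x < c ∧ c ≤ y := by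
      intro x hx
      have pick : ∀ γ, γ < x → ∃ c, c ∈ C γ ∧ x < c ∧ c < μ.ord := by
        intro γ hγ
        obtain ⟨c, h1, h2, h3⟩ := (h γ (hγ.trans hx)).2 x hx
        exact ⟨c, h1, h2, h3⟩
      choose p hp1 hp2 hp3 using pick
      have hbsup : Ordinal.bsup x p < μ.ord := by
        refine Cardinal.bsup_lt_ord_of_isRegular hreg (Cardinal.lt_ord.mp hx) hp3
      refine ⟨max (x + 1) (Ordinal.bsup x p), max_lt (succ_lt_kappa hunc hx) hbsup,
        lt_of_lt_of_le (lt_add_one x) (le_max_left _ _), fun γ hγ => ?_⟩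
      exact ⟨p γ hγ, hp1 γ hγ, hp2 γ hγ,
        le_trans (Ordinal.le_bsup p γ hγ) (le_max_right _ _)⟩
    obtain ⟨g, hg0, hglt, hsm, hP, hbs, hslt, hsne, hsdown, hgsup⟩ :=
      omega_chain hreg hunc hstep hb
    refine ⟨⨆ n, g n, ⟨hslt, fun γ hγ => ?_⟩, hbs, hslt⟩
    obtain ⟨n, hn⟩ := hsdown γ hγ
    refine (h γ (hγ.trans hslt)).1 _ hslt ⟨hsne, fun x hx => ?_⟩
    obtain ⟨m, hm⟩ := hsdown x hx
    set k := max n m with hk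
    have hγk : γ < g k := lt_of_lt_of_le hn (hsm.monotone (le_max_left n m))
    have hxk : x < g k := lt_of_lt_of_le hm (hsm.monotone (le_max_right n m))
    obtain ⟨c, hc, hc1, hc2⟩ := hP k γ hγk
    exact ⟨c, hc, lt_trans hxk hc1, lt_of_le_of_lt hc2 (hgsup (k + 1))⟩

/-- Fodor's lemma. -/
lemma fodor (hreg : μ.IsRegular) (hunc : ℵ₀ < μ) {S : Set Ordinal}
    (hS : IsStationaryIn S μ.ord) (f : Ordinal → Ordinal)
    (hf : ∀ α ∈ S, f α < α) : ∃ γ, IsStationaryIn {α | α ∈ S ∧ f α = γ} μ.ord := by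
  by_contra hc
  push_neg at hc
  have hsub : ∀ γ : Ordinal, {α | α ∈ S ∧ f α = γ} ⊆ Set.Iio μ.ord :=
    fun γ x hx => hS.1 hx.1
  choose Cl hCl1 hCl2 using fun γ => exists_disjoint_club (hsub γ) (hc γ)
  obtain ⟨α, hαS, hαΔ⟩ := hS.2 _ (isClubIn_diagonal hreg hunc (fun γ _ => hCl1 γ))
  have hmem : α ∈ {β | β ∈ S ∧ f β = f α} ∩ Cl (f α) :=
    ⟨⟨hαS, rfl⟩, hαΔ.2 (f α) (hf α hαS)⟩
  rw [hCl2 (f α)] at hmem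
  exact hmem

lemma pair_club (hunc : ℵ₀ < μ) {x : Ordinal} (hx : x < μ.ord) :
    IsClubIn {c | x < c ∧ c < μ.ord} μ.ord := by
  constructor
  · intro o ho hacc
    obtain ⟨c, hc, -, hco⟩ := hacc.2 0 (pos_iff_ne_zero.mpr hacc.1)
    exact ⟨lt_trans hc.1 hco, ho⟩
  · intro b hb
    have h1 : max b x + 1 < μ.ord := succ_lt_kappa hunc (max_lt hb hx)
    exact ⟨max b x + 1, ⟨lt_of_le_of_lt (le_max_right b x) (lt_add_one _), h1⟩,
      lt_of_le_of_lt (le_max_left b x) (lt_add_one _), h1⟩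

lemma exists_pair (hreg : μ.IsRegular) (hunc : ℵ₀ < μ) {S : Set Ordinal}
    (hS : IsStationaryIn S μ.ord) : ∃ a ∈ S, ∃ b ∈ S, a < b := by
  obtain ⟨a, haS, -⟩ := hS.2 _ (isClubIn_Iio hunc)
  obtain ⟨b, hbS, hab, -⟩ := hS.2 _ (pair_club hunc (hS.1 haS))
  exact ⟨a, haS, b, hbS, hab⟩

lemma stationary_iUnion (hreg : μ.IsRegular) (hunc : ℵ₀ < μ) {ι : Type} [Countable ι]
    {S : Set Ordinal} {T : ι → Set Ordinal} (hS : IsStationaryIn S μ.ord)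
    (hsub : S ⊆ ⋃ i, T i) : ∃ i, IsStationaryIn (S ∩ T i) μ.ord := by
  by_contra hc
  push_neg at hc
  choose Cl h1 h2 using fun i =>
    exists_disjoint_club (fun x (hx : x ∈ S ∩ T i) => hS.1 hx.1) (hc i)
  obtain ⟨α, hαS, hαC⟩ := hS.2 _ (isClubIn_iInter hreg hunc h1)
  obtain ⟨i, hi⟩ := Set.mem_iUnion.mp (hsub hαS)
  have hmem : α ∈ (S ∩ T i) ∩ Cl i := ⟨⟨hαS, hi⟩, Set.mem_iInter.mp hαC i⟩
  rw [h2 i] at hmem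
  exact hmem

/-- Dichotomy: any ordinal-valued function on a stationary set is constant or strictly
increasing on a stationary subset. -/
lemma dichotomy (hreg : μ.IsRegular) (hunc : ℵ₀ < μ) {S : Set Ordinal}
    (hS : IsStationaryIn S μ.ord) (f : Ordinal.{u} → Ordinal.{max u v}) {δ : Ordinal.{max u v}}
    (hf : ∀ α ∈ S, f α < δ) :
    ∃ S', S' ⊆ S ∧ IsStationaryIn S' μ.ord ∧
      ((∀ α ∈ S', ∀ β ∈ S', f α = f β) ∨ (∀ α ∈ S', ∀ β ∈ S', α < β → f α < f β)) := by
  classical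
  have hPδ : IsStationaryIn {α | α ∈ S ∧ f α < δ} μ.ord :=
    stationary_mono (fun α hα => ⟨hα, hf α hα⟩) (fun x hx => hS.1 hx.1) hS
  obtain ⟨γs, hγs, hmin⟩ := Ordinal.lt_wf.has_min
    {γ | IsStationaryIn {α | α ∈ S ∧ f α < γ} μ.ord} ⟨δ, hPδ⟩
  have hnot : ∀ γ < γs, ¬ IsStationaryIn {α | α ∈ S ∧ f α < γ} μ.ord :=
    fun γ hγ hγP => hmin γ hγP hγ
  rcases Ordinal.zero_or_succ_or_isSuccLimit γs with h0 | ⟨γ0, hγ0⟩ | hlim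
  · exfalso
    subst h0
    obtain ⟨α, ⟨-, hα⟩, -⟩ := hγs.2 _ (isClubIn_Iio hunc)
    exact not_lt.mpr zero_le hα
  · subst hγ0
    obtain ⟨C0, hC0, hC0disj⟩ := exists_disjoint_club
      (fun x (hx : x ∈ {α | α ∈ S ∧ f α < γ0}) => hS.1 hx.1)
      (hnot γ0 (Order.lt_succ γ0))
    refine ⟨{α | α ∈ S ∧ f α = γ0}, fun α hα => hα.1,
      ⟨fun x (hx : x ∈ S ∧ f x = γ0) => hS.1 hx.1, ?_⟩,
      Or.inl (fun α hα β hβ => hα.2.trans hβ.2.symm)⟩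
    intro C' hC'
    obtain ⟨α, ⟨hαS, hαlt⟩, hαC0, hαC'⟩ := hγs.2 _ (isClubIn_inter hreg hunc hC0 hC')
    have hne : ¬ f α < γ0 := fun hcon => by
      have hmem : α ∈ {β | β ∈ S ∧ f β < γ0} ∩ C0 := ⟨⟨hαS, hcon⟩, hαC0⟩
      rw [hC0disj] at hmem; exact hmem
    have heq : f α = γ0 := le_antisymm (Order.lt_succ_iff.mp hαlt) (not_lt.mp hne)
    exact ⟨α, ⟨hαS, heq⟩, hαC'⟩
  · -- limit case
    set S0 : Set Ordinal := {α | α ∈ S ∧ f α < γs} with hS0def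
    have hS0 : IsStationaryIn S0 μ.ord := hγs
    have hS0sub : S0 ⊆ Set.Iio μ.ord := fun x hx => hS.1 hx.1
    set B : Set Ordinal :=
      {α | α ∈ S0 ∧ f α < Ordinal.bsup.{u,v} α (fun β _ => if β ∈ S0 then f β + 1 else 0)} with hB
    have hBnonstat : ¬ IsStationaryIn B μ.ord := by
      intro hBs
      have hw : ∀ α, ∃ β, α ∈ B → (β ∈ S0 ∧ β < α ∧ f α ≤ f β) := by
        intro α
        by_cases hα : α ∈ B
        · obtain ⟨β, hβα, hβ⟩ := (Ordinal.lt_bsup _).mp hα.2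
          by_cases hβS : β ∈ S0
          · rw [if_pos hβS] at hβ
            refine ⟨β, fun _ => ⟨hβS, hβα, ?_⟩⟩
            rwa [Ordinal.add_one_eq_succ, Order.lt_succ_iff] at hβ
          · rw [if_neg hβS] at hβ
            exact absurd hβ (not_lt.mpr zero_le)
        · exact ⟨0, fun h => absurd h hα⟩
      choose w hwspec using hw
      obtain ⟨β₀, hfib⟩ := fodor hreg hunc hBs w (fun α hα => (hwspec α hα).2.1)
      obtain ⟨α₁, ⟨hα₁B, hα₁w⟩, -⟩ := hfib.2 _ (isClubIn_Iio hunc)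
      have hβ₀S0 : β₀ ∈ S0 := hα₁w ▸ (hwspec α₁ hα₁B).1
      have hsucclt : f β₀ + 1 < γs := by
        rw [Ordinal.add_one_eq_succ]
        exact hlim.succ_lt hβ₀S0.2
      refine hnot _ hsucclt ?_
      refine stationary_mono (S := {α | α ∈ B ∧ w α = β₀}) ?_
        (fun x (hx : x ∈ S ∧ f x < f β₀ + 1) => hS.1 hx.1) hfib
      rintro α ⟨hαB, hαw⟩
      refine ⟨hαB.1.1, ?_⟩
      have hle := (hwspec α hαB).2.2
      rw [hαw] at hle
      exact lt_of_le_of_lt hle (lt_add_one _)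
    obtain ⟨CB, hCB, hCBdisj⟩ := exists_disjoint_club (fun x hx => hS0sub hx.1) hBnonstat
    refine ⟨{α | α ∈ S0 ∧ Ordinal.bsup.{u,v} α (fun β _ => if β ∈ S0 then f β + 1 else 0) ≤ f α},
      fun α hα => hα.1.1,
      ⟨fun x hx => hS0sub hx.1, ?_⟩, Or.inr ?_⟩
    · intro C' hC'
      obtain ⟨α, hαS0, hαCB, hαC'⟩ := hS0.2 _ (isClubIn_inter hreg hunc hCB hC')
      have hnB : α ∉ B := fun hcon => by
        have hmem : α ∈ B ∩ CB := ⟨hcon, hαCB⟩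
        rw [hCBdisj] at hmem; exact hmem
      have hle : Ordinal.bsup.{u,v} α (fun β _ => if β ∈ S0 then f β + 1 else 0) ≤ f α :=
        not_lt.mp (fun hcon => hnB ⟨hαS0, hcon⟩)
      exact ⟨α, ⟨hαS0, hle⟩, hαC'⟩
    · intro α hα β hβ hab
      have h1 : f α + 1 ≤ Ordinal.bsup.{u,v} β (fun γ _ => if γ ∈ S0 then f γ + 1 else 0) := by
        have hle := Ordinal.le_bsup.{u,v} (fun γ (_ : γ < β) => if γ ∈ S0 then f γ + 1 else 0) α hab
        rwa [if_pos hα.1] at hle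
      exact lt_of_lt_of_le (lt_add_one _) (h1.trans hβ.2)

/-- Dichotomy, with independent universe for the codomain. -/
lemma dichotomy' (hreg : μ.IsRegular) (hunc : ℵ₀ < μ) {S : Set Ordinal}
    (hS : IsStationaryIn S μ.ord) (f : Ordinal.{u} → Ordinal.{v}) {δ : Ordinal.{v}}
    (hf : ∀ α ∈ S, f α < δ) :
    ∃ S', S' ⊆ S ∧ IsStationaryIn S' μ.ord ∧
      ((∀ α ∈ S', ∀ β ∈ S', f α = f β) ∨ (∀ α ∈ S', ∀ β ∈ S', α < β → f α < f β)) := by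
  obtain ⟨S', h1, h2, h3⟩ := dichotomy.{u, v} hreg hunc hS
    (fun α => Ordinal.lift.{u, v} (f α)) (δ := Ordinal.lift.{u, v} δ)
    (fun α hα => Ordinal.lift_lt.mpr (hf α hα))
  refine ⟨S', h1, h2, ?_⟩
  rcases h3 with h | h
  · exact Or.inl (fun α hα β hβ => Ordinal.lift_inj.mp (h α hα β hβ))
  · exact Or.inr (fun α hα β hβ hab => Ordinal.lift_lt.mp (h α hα β hβ hab))

end Stmt9

theorem stmt9 (μ : Cardinal) (hreg : μ.IsRegular) (hunc : Cardinal.aleph0 < μ)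
    (δ : Ordinal) (S : Set Ordinal) (hS : IsStationaryIn S μ.ord)
    (η : Ordinal → List Ordinal)
    (hη : ∀ α ∈ S, (η α).Pairwise (· > ·) ∧ ∀ x ∈ η α, x < δ) :
    ∃ S' ⊆ S, IsStationaryIn S' μ.ord ∧ ∃ n : ℕ,
      (∀ α ∈ S', (η α).length = n) ∧
      (∀ i < n,
        (∀ α ∈ S', ∀ β ∈ S', (η α).getD i 0 = (η β).getD i 0) ∨
        (∀ α ∈ S', ∀ β ∈ S', α < β → (η α).getD i 0 < (η β).getD i 0)) ∧
      (∀ i j : ℕ, i < j → j < n →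
        ∀ α ∈ S', ∀ β ∈ S', (η α).getD i 0 ≠ (η β).getD j 0) := by
  classical
  obtain ⟨n, hS1⟩ := Stmt9.stationary_iUnion hreg hunc
    (T := fun n : ℕ => {α | (η α).length = n}) hS
    (fun α _ => Set.mem_iUnion.mpr ⟨(η α).length, rfl⟩)
  set S₁ : Set Ordinal := S ∩ {α | (η α).length = n} with hS₁def
  have hS₁S : S₁ ⊆ S := Set.inter_subset_left
  have hlen : ∀ α ∈ S₁, (η α).length = n := fun α hα => hα.2
  -- Step 2: iterate the dichotomy over coordinates
  have step2 : ∀ k : ℕ, ∃ T, T ⊆ S₁ ∧ IsStationaryIn T μ.ord ∧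
      ∀ i < k, (∀ α ∈ T, ∀ β ∈ T, (η α).getD i 0 = (η β).getD i 0) ∨
        (∀ α ∈ T, ∀ β ∈ T, α < β → (η α).getD i 0 < (η β).getD i 0) := by
    intro k
    induction k with
    | zero => exact ⟨S₁, subset_rfl, hS1, fun i hi => absurd hi (Nat.not_lt_zero i)⟩
    | succ k ih =>
      obtain ⟨T, hTsub, hTstat, hTcond⟩ := ih
      have hbd : ∀ α ∈ T, (η α).getD k 0 < δ + 1 := by
        intro α hα
        by_cases hk : k < (η α).length
        · have hmem : (η α).getD k 0 ∈ η α := by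
            rw [List.getD_eq_getElem _ _ hk]
            exact List.getElem_mem _
          exact lt_trans ((hη α (hS₁S (hTsub hα))).2 _ hmem) (lt_add_one δ)
        · rw [List.getD_eq_default _ _ (le_of_not_gt hk)]
          exact lt_of_le_of_lt (zero_le (a := δ)) (lt_add_one δ)
      obtain ⟨T', hT'sub, hT'stat, hT'cond⟩ := Stmt9.dichotomy' hreg hunc hTstat
        (fun α => (η α).getD k 0) hbd
      refine ⟨T', hT'sub.trans hTsub, hT'stat, fun i hi => ?_⟩
      rcases Nat.lt_succ_iff_lt_or_eq.mp hi with hik | rfl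
      · rcases hTcond i hik with h | h
        · exact Or.inl (fun α hα β hβ => h α (hT'sub hα) β (hT'sub hβ))
        · exact Or.inr (fun α hα β hβ hab => h α (hT'sub hα) β (hT'sub hβ) hab)
      · exact hT'cond
  obtain ⟨S₄, hS₄sub, hS₄stat, hS₄cond⟩ := step2 n
  -- coordinates strictly decreasing within one sequence
  have hdec : ∀ i j, i < j → j < n → ∀ α ∈ S₄, (η α).getD j 0 < (η α).getD i 0 := by
    intro i j hij hjn α hα
    have hlenα : (η α).length = n := hlen α (hS₄sub hα)
    have hj : j < (η α).length := hlenα ▸ hjn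
    have hi : i < (η α).length := lt_trans hij hj
    rw [List.getD_eq_getElem _ _ hi, List.getD_eq_getElem _ _ hj]
    exact List.pairwise_iff_getElem.mp (hη α (hS₁S (hS₄sub hα))).1 i j hi hj hij
  -- Step 3: per-pair removal sets
  have perpair : ∀ p : ℕ × ℕ, ∃ R : Set Ordinal, ¬ IsStationaryIn R μ.ord ∧
      R ⊆ Set.Iio μ.ord ∧ (p.1 < p.2 → p.2 < n →
        ∀ α ∈ S₄ \ R, ∀ β ∈ S₄ \ R, (η α).getD p.1 0 ≠ (η β).getD p.2 0) := by
    rintro ⟨i, j⟩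
    by_cases hvalid : i < j ∧ j < n
    · obtain ⟨hij, hjn⟩ := hvalid
      rcases hS₄cond i (lt_trans hij hjn) with hconst_i | hinc_i
      · refine ⟨∅, Stmt9.empty_not_stationary hunc, Set.empty_subset _,
          fun _ _ α hα β hβ => ?_⟩
        have h1 : (η α).getD i 0 = (η β).getD i 0 := hconst_i α hα.1 β hβ.1
        rw [h1]
        exact ne_of_gt (hdec i j hij hjn β hβ.1)
      · rcases hS₄cond j hjn with hconst_j | hinc_j
        · refine ⟨{α | α ∈ S₄ ∧ ∃ β ∈ S₄, (η α).getD i 0 = (η β).getD j 0}, ?_,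
            fun x hx => hS₄stat.1 hx.1,
            fun _ _ α hα β hβ heq => hα.2 ⟨hα.1, β, hβ.1, heq⟩⟩
          intro hstat
          obtain ⟨a, ha, b, hb, hab⟩ := Stmt9.exists_pair hreg hunc hstat
          obtain ⟨βa, hβa, heqa⟩ := ha.2
          obtain ⟨βb, hβb, heqb⟩ := hb.2
          have heq : (η a).getD i 0 = (η b).getD i 0 := by
            rw [heqa, heqb]
            exact hconst_j βa hβa βb hβb
          exact absurd heq (ne_of_lt (hinc_i a ha.1 b hb.1 hab))
        · refine ⟨{β | β ∈ S₄ ∧ ∃ α ∈ S₄, (η α).getD i 0 = (η β).getD j 0}, ?_,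
            fun x hx => hS₄stat.1 hx.1,
            fun _ _ α hα β hβ heq => hβ.2 ⟨hβ.1, α, hα.1, heq⟩⟩
          intro hstat
          have hw : ∀ β, ∃ a,
              β ∈ {β | β ∈ S₄ ∧ ∃ α ∈ S₄, (η α).getD i 0 = (η β).getD j 0} →
              (a ∈ S₄ ∧ (η a).getD i 0 = (η β).getD j 0 ∧ a < β) := by
            intro β
            by_cases hβ : β ∈ {β | β ∈ S₄ ∧ ∃ α ∈ S₄, (η α).getD i 0 = (η β).getD j 0}
            · obtain ⟨a, haS, haeq⟩ := hβ.2
              refine ⟨a, fun _ => ⟨haS, haeq, ?_⟩⟩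
              rcases lt_trichotomy a β with h | rfl | h
              · exact h
              · exact absurd haeq (ne_of_gt (hdec i j hij hjn a haS))
              · exact absurd haeq (ne_of_gt
                  (lt_trans (hdec i j hij hjn β hβ.1) (hinc_i β hβ.1 a haS h)))
            · exact ⟨0, fun h => absurd h hβ⟩
          choose w hwspec using hw
          obtain ⟨α₀, hfib⟩ := Stmt9.fodor hreg hunc hstat w
            (fun β hβ => (hwspec β hβ).2.2)
          obtain ⟨b₁, hb₁, b₂, hb₂, h12⟩ := Stmt9.exists_pair hreg hunc hfib
          have e1 : (η (w b₁)).getD i 0 = (η b₁).getD j 0 := (hwspec b₁ hb₁.1).2.1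
          have e2 : (η (w b₂)).getD i 0 = (η b₂).getD j 0 := (hwspec b₂ hb₂.1).2.1
          rw [hb₁.2] at e1
          rw [hb₂.2] at e2
          have : (η b₁).getD j 0 = (η b₂).getD j 0 := e1 ▸ e2
          exact absurd this (ne_of_lt (hinc_j b₁ hb₁.1.1 b₂ hb₂.1.1 h12))
    · exact ⟨∅, Stmt9.empty_not_stationary hunc, Set.empty_subset _,
        fun h1 h2 => absurd ⟨h1, h2⟩ hvalid⟩
  choose Rf hR1 hR2 hR3 using perpair
  set U : Set Ordinal := ⋃ p : Fin n × Fin n, Rf (p.1.1, p.2.1) with hUdef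
  have hUsub : U ⊆ Set.Iio μ.ord := Set.iUnion_subset (fun p => hR2 _)
  have hUnonstat : ¬ IsStationaryIn U μ.ord := by
    intro hUs
    obtain ⟨p, hp⟩ := Stmt9.stationary_iUnion hreg hunc hUs subset_rfl
    exact hR1 _ (Stmt9.stationary_mono Set.inter_subset_right (hR2 _) hp)
  refine ⟨S₄ \ U, (Set.diff_subset).trans (hS₄sub.trans hS₁S),
    Stmt9.stationary_sdiff hreg hunc hS₄stat hUnonstat hUsub, n, ?_, ?_, ?_⟩
  · exact fun α hα => hlen α (hS₄sub hα.1)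
  · intro i hi
    rcases hS₄cond i hi with h | h
    · exact Or.inl fun α hα β hβ => h α hα.1 β hβ.1
    · exact Or.inr fun α hα β hβ hab => h α hα.1 β hβ.1 hab
  · intro i j hij hjn α hα β hβ heq
    have hiU : Rf (i, j) ⊆ U := by
      intro x hx
      exact Set.mem_iUnion.mpr ⟨(⟨i, lt_trans hij hjn⟩, ⟨j, hjn⟩), hx⟩
    exact hR3 (i, j) hij hjn α ⟨hα.1, fun h => hα.2 (hiU h)⟩
      β ⟨hβ.1, fun h => hβ.2 (hiU h)⟩ heq
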